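/- The vector p_V = (4, √2 - i√6, -2 - 2i√3)ᵀ is an eigenvector of V = TS⁻¹ with eigenvalue 1, and ⟨p_V, p_V⟩ = -8 < 0 for the Hermitian form ⟨z,w⟩ = z̄₁w₃ + z̄₂w₂ + z̄₃w₁ (so [p_V] lies in the complex hyperbolic plane). -/
import Mathlib

open Matrix Complex

noncomputable def ζ : ℂ := Complex.exp (Complex.I * Real.pi / 3)

noncomputable def S : Matrix (Fin 3) (Fin 3) ℂ :=
  !![1, (Real.sqrt 2 : ℂ) * (starRingEnd ℂ) ζ, -1;
     -(Real.sqrt 2 : ℂ) * ζ, -1, 0;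
     -1, 0, 0]

noncomputable def T : Matrix (Fin 3) (Fin 3) ℂ :=
  !![0, 0, -1;
     0, -1, -(Real.sqrt 2 : ℂ) * (starRingEnd ℂ) ζ;
     -1, (Real.sqrt 2 : ℂ) * ζ, 1]

noncomputable def V : Matrix (Fin 3) (Fin 3) ℂ := T * S ^ 2

noncomputable def pV : Fin 3 → ℂ :=
  ![4, (Real.sqrt 2 : ℂ) - (Real.sqrt 6 : ℂ) * Complex.I,
    -2 - 2 * (Real.sqrt 3 : ℂ) * Complex.I]

noncomputable def herm (z w : Fin 3 → ℂ) : ℂ :=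
  (starRingEnd ℂ) (z 0) * w 2 + (starRingEnd ℂ) (z 1) * w 1 + (starRingEnd ℂ) (z 2) * w 0

lemma zeta_eq : ζ = ((1/2 : ℝ) : ℂ) + ((Real.sqrt 3 / 2 : ℝ) : ℂ) * Complex.I := by
  have h : Complex.I * (Real.pi : ℂ) / 3 = ((Real.pi/3 : ℝ) : ℂ) * Complex.I := by
    push_cast; ring
  rw [ζ, h, Complex.exp_mul_I, ← Complex.ofReal_cos, ← Complex.ofReal_sin,
    Real.cos_pi_div_three, Real.sin_pi_div_three]

lemma zre : ζ.re = 1/2 := by rw [zeta_eq]; simp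
lemma zim : ζ.im = Real.sqrt 3 / 2 := by rw [zeta_eq]; simp

lemma s6r : Real.sqrt 6 = Real.sqrt 2 * Real.sqrt 3 := by
  rw [show (6:ℝ) = 2*3 by norm_num, Real.sqrt_mul (by norm_num)]

theorem stmt_16 : V.mulVec pV = pV ∧ herm pV pV = -8 := by
  have h2 : Real.sqrt 2 * Real.sqrt 2 = 2 := Real.mul_self_sqrt (by norm_num)
  have h3 : Real.sqrt 3 * Real.sqrt 3 = 3 := Real.mul_self_sqrt (by norm_num)
  have h2b : Real.sqrt 2 ^ 2 = 2 := by rw [pow_two]; exact h2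
  have h3b : Real.sqrt 3 ^ 2 = 3 := by rw [pow_two]; exact h3
  have h2c : Real.sqrt 2 ^ 3 = 2 * Real.sqrt 2 := by rw [pow_succ, h2b]
  have h3c : Real.sqrt 3 ^ 3 = 3 * Real.sqrt 3 := by rw [pow_succ, h3b]
  have h2d : Real.sqrt 2 ^ 4 = 4 := by rw [show 4 = 2+2 from rfl, pow_add, h2b]; norm_num
  have h3d : Real.sqrt 3 ^ 4 = 9 := by rw [show 4 = 2+2 from rfl, pow_add, h3b]; norm_num
  constructor
  · funext i
    fin_cases i <;>
    · simp [V, S, T, pV, Matrix.mulVec, dotProduct, pow_two, Matrix.mul_apply,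
        Fin.sum_univ_succ, s6r, Complex.ext_iff, zre, zim]
      constructor <;>
        (ring_nf; try simp only [h2b, h3b, h2c, h3c, h2d, h3d]; try ring_nf; try norm_num)
  · simp [herm, pV, s6r, Complex.ext_iff]
    constructor <;>
      (ring_nf; try simp only [h2b, h3b, h2c, h3c, h2d, h3d]; try ring_nf; try norm_num)
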